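/- arXiv:1704.00273 — 2 statements merged into one kernel-verified Lean document; each statement's English description precedes it below -/
import Mathlib

section
/- Let n ∈ ℕ and let G ∈ ℝ^{n×n} be symmetric positive semidefinite. Then |√G − I| ≤ |G − I|, where √G is the unique positive semidefinite square root of G, I is the identity matrix, and |·| denotes the Frobenius norm. -/
open Matrix

noncomputable section

/-- Frobenius norm of an `n × n` matrix. -/
def frobN {n : ℕ} (M : Matrix (Fin n) (Fin n) ℝ) : ℝ := Real.sqrt (∑ i, ∑ j, (M i j)^2)

/-- The square root of a positive semidefinite matrix, as `Matrix.PosSemidef.sqrt` was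
defined in the older Mathlib (removed since). -/
def posSemidefSqrtOld {n : ℕ} {G : Matrix (Fin n) (Fin n) ℝ} (hG : G.PosSemidef) :
    Matrix (Fin n) (Fin n) ℝ :=
  hG.1.eigenvectorUnitary.1 * diagonal ((↑) ∘ (√·) ∘ hG.1.eigenvalues) *
  (star hG.1.eigenvectorUnitary : Matrix (Fin n) (Fin n) ℝ)

lemma posSemidefSqrtOld_posSemidef {n : ℕ} {G : Matrix (Fin n) (Fin n) ℝ} (hG : G.PosSemidef) :
    (posSemidefSqrtOld hG).PosSemidef := by
  have hD : (diagonal ((↑) ∘ (√·) ∘ hG.1.eigenvalues) : Matrix (Fin n) (Fin n) ℝ).PosSemidef :=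
    posSemidef_diagonal_iff.mpr fun i => by simp [Real.sqrt_nonneg]
  have := hD.mul_mul_conjTranspose_same hG.1.eigenvectorUnitary.1
  simpa [posSemidefSqrtOld, star_eq_conjTranspose] using this

lemma posSemidefSqrtOld_mul_self {n : ℕ} {G : Matrix (Fin n) (Fin n) ℝ} (hG : G.PosSemidef) :
    posSemidefSqrtOld hG * posSemidefSqrtOld hG = G := by
  have hspec := hG.1.spectral_theorem
  rw [Unitary.conjStarAlgAut_apply] at hspec
  have hU := Unitary.coe_star_mul_self hG.1.eigenvectorUnitary
  unfold posSemidefSqrtOld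
  conv_rhs => rw [hspec]
  rw [show ∀ a b c d e f : Matrix (Fin n) (Fin n) ℝ, a*b*c*(d*e*f) = a*(b*(c*d)*e)*f by
    intros; simp only [Matrix.mul_assoc], hU, Matrix.mul_one, diagonal_mul_diagonal]
  congr 2
  ext i j
  simp only [diagonal_apply]
  split_ifs with h
  · subst h
    exact Real.mul_self_sqrt (hG.eigenvalues_nonneg i)
  · rfl

lemma trace_nonneg' {n : ℕ} {P : Matrix (Fin n) (Fin n) ℝ} (hP : P.PosSemidef) :
    0 ≤ P.trace := by
  refine Finset.sum_nonneg fun i _ => ?_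
  simpa using hP.diag_nonneg (i := i)

lemma frob_sq_eq {n : ℕ} {A : Matrix (Fin n) (Fin n) ℝ} (hA : Aᵀ = A) :
    ∑ i, ∑ j, (A i j)^2 = (A * A).trace := by
  simp only [trace, diag_apply, mul_apply]
  refine Finset.sum_congr rfl fun i _ => Finset.sum_congr rfl fun j _ => ?_
  rw [sq]
  congr 1
  exact (congrFun (congrFun hA i) j).symm

/-- For a positive semidefinite matrix `G`, the Frobenius distance from its unique
positive semidefinite square root to the identity is at most `|G − I|`. -/
theorem frob_sqrt_sub_one_le
    (n : ℕ) (G : Matrix (Fin n) (Fin n) ℝ) (hG : G.PosSemidef) :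
    frobN (posSemidefSqrtOld hG - 1) ≤ frobN (G - 1) := by
  set S := posSemidefSqrtOld hG with hSdef
  have hS : S.PosSemidef := posSemidefSqrtOld_posSemidef hG
  have hSsym : Sᵀ = S := hS.isHermitian
  have hSS : S * S = G := posSemidefSqrtOld_mul_self hG
  have hGsym : Gᵀ = G := hG.isHermitian
  -- the PSD correction term
  have hM : (S * S + S + S).PosSemidef := by
    have h1 : (S * S).PosSemidef := by
      have := Matrix.posSemidef_conjTranspose_mul_self S
      rwa [conjTranspose_eq_transpose_of_trivial, hSsym] at this
    exact (h1.add hS).add hS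
  have hP : ((S - 1) * (S * S + S + S) * (S - 1)).PosSemidef := by
    have := hM.conjTranspose_mul_mul_same (S - 1)
    have hsym : (S - 1)ᴴ = S - 1 := by
      rw [conjTranspose_eq_transpose_of_trivial, transpose_sub, hSsym, transpose_one]
    rwa [hsym] at this
  have key : (G - 1) * (G - 1) = (S - 1) * (S - 1) + (S - 1) * (S * S + S + S) * (S - 1) := by
    rw [← hSS]; noncomm_ring
  have htr : ((S - 1) * (S - 1)).trace ≤ ((G - 1) * (G - 1)).trace := by
    rw [key, trace_add]
    linarith [trace_nonneg' hP]
  have h1 : (S - 1)ᵀ = S - 1 := by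
    rw [transpose_sub, hSsym, transpose_one]
  have h2 : (G - 1)ᵀ = G - 1 := by
    rw [transpose_sub, hGsym, transpose_one]
  unfold frobN
  apply Real.sqrt_le_sqrt
  rw [frob_sq_eq h1, frob_sq_eq h2]
  exact htr
end
end

section
/- Let F ∈ ℝ^{2×2} with det F > 0. Then dist(F, SO(2)) = |√(FᵀF) − I|, where dist(F, SO(2)) = min_{R ∈ SO(2)} |F − R|, √(FᵀF) is the unique positive semidefinite square root of FᵀF, and |·| denotes the Frobenius norm. -/
open Matrix

noncomputable section

abbrev Mat2 := Matrix (Fin 2) (Fin 2) ℝ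

/-- Frobenius norm of a matrix. -/
def frob (M : Mat2) : ℝ := Real.sqrt (∑ i, ∑ j, (M i j)^2)

/-- The rotation group `SO(2)`. -/
def SO2 : Set Mat2 := {R | Rᵀ * R = 1 ∧ R.det = 1}

/-- Frobenius distance from a matrix to `SO(2)`. -/
def distSO2 (F : Mat2) : ℝ := sInf {d | ∃ R ∈ SO2, d = frob (F - R)}

lemma of_mat2 (M : Mat2) : Matrix.of M = M := rfl

lemma quadform_nonneg (S : Mat2) (h : S.PosSemidef) (x y : ℝ) :
    0 ≤ x^2 * S 0 0 + x*y*(S 0 1 + S 1 0) + y^2 * S 1 1 := by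
  have := h.dotProduct_mulVec_nonneg ![x, y]
  simp [dotProduct, mulVec, Fin.sum_univ_two] at this
  ring_nf at this ⊢
  linarith

lemma sum2_eq (a b c d t : ℝ) (ht : t ≠ 0) (h2 : t^2 = (a+d)^2 + (c-b)^2) :
    (a - (a+d)/t)^2 + (b - -((c-b)/t))^2 + (c - (c-b)/t)^2 + (d - (a+d)/t)^2
      = a^2+b^2+c^2+d^2 + 2 - 2*t := by
  have key : (a - (a+d)/t)^2 + (b - -((c-b)/t))^2 + (c - (c-b)/t)^2 + (d - (a+d)/t)^2
      = a^2+b^2+c^2+d^2 + 2*((a+d)^2+(c-b)^2)/t^2 - 2*((a+d)^2+(c-b)^2)/t := by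
    field_simp
    ring
  rw [key, ← h2]
  rw [mul_div_assoc, div_self (pow_ne_zero 2 ht)]
  have h3 : 2 * t ^ 2 / t = 2 * t := by
    field_simp
  rw [h3]
  ring

set_option maxHeartbeats 1000000 in
/-- For `F` with `det F > 0`, the distance of `F` to `SO(2)` equals `|√(FᵀF) − I|`,
where `√(FᵀF)` is the unique positive semidefinite square root of `FᵀF`. -/
theorem dist_SO2_eq_frob_sqrt
    (F : Mat2) (hF : 0 < F.det) :
    ∀ S : Mat2, S.PosSemidef → S * S = Fᵀ * F → distSO2 F = frob (S - 1) := by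
  intro S hS hSS
  have hdetF : F.det = F 0 0 * F 1 1 - F 0 1 * F 1 0 := Matrix.det_fin_two F
  set a := F 0 0 with ha
  set b := F 0 1 with hb
  set c := F 1 0 with hc
  set d := F 1 1 with hd
  -- symmetry of S
  have hsym : S 0 1 = S 1 0 := by
    have := hS.1.apply 0 1
    simpa using this.symm
  set p := S 0 0 with hp'
  set q := S 1 0 with hq'
  set r := S 1 1 with hr'
  -- diagonal entries nonneg
  have hp0 : 0 ≤ p := by have := quadform_nonneg S hS 1 0; rw [hsym] at this; linarith
  have hr0 : 0 ≤ r := by have := quadform_nonneg S hS 0 1; rw [hsym] at this; linarith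
  -- entry equations from S*S = Fᵀ*F
  have e00 : p^2 + q^2 = a^2 + c^2 := by
    have h := congrFun (congrFun hSS 0) 0
    simp [Matrix.mul_apply, Fin.sum_univ_two, Matrix.transpose_apply, hsym] at h
    linear_combination h
  have e11 : q^2 + r^2 = b^2 + d^2 := by
    have h := congrFun (congrFun hSS 1) 1
    simp [Matrix.mul_apply, Fin.sum_univ_two, Matrix.transpose_apply, hsym] at h
    linear_combination h
  -- determinant of S
  have hdS2 : (p*r - q^2)^2 = (F.det)^2 := by
    have h1 : S.det * S.det = F.det * F.det := by
      have : (S * S).det = (Fᵀ * F).det := by rw [hSS]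
      simpa [Matrix.det_mul, Matrix.det_transpose] using this
    have h2 : S.det = p*r - q^2 := by
      rw [Matrix.det_fin_two]; rw [hsym]; ring
    calc (p*r - q^2)^2 = S.det * S.det := by rw [h2]; ring
      _ = F.det * F.det := h1
      _ = F.det^2 := by ring
  -- det S ≥ 0
  have hdS0 : 0 ≤ p*r - q^2 := by
    rcases le_or_gt 0 (p*r - q^2) with h | h
    · exact h
    · exfalso
      have hqp := quadform_nonneg S hS q (-p)
      have hqr := quadform_nonneg S hS r (-q)
      rw [hsym] at hqp hqr
      have hP : 0 ≤ p * (p*r - q^2) := hqp.trans_eq (by ring)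
      have hR : 0 ≤ r * (p*r - q^2) := hqr.trans_eq (by ring)
      have hpz : p = 0 := by
        refine le_antisymm ?_ hp0
        by_contra hcon
        push_neg at hcon
        have := mul_pos hcon (show (0:ℝ) < -(p*r - q^2) by linarith)
        linarith [hP, this]
      have hrz : r = 0 := by
        refine le_antisymm ?_ hr0
        by_contra hcon
        push_neg at hcon
        have := mul_pos hcon (show (0:ℝ) < -(p*r - q^2) by linarith)
        linarith [hR, this]
      have h1 := quadform_nonneg S hS 1 1
      have h2 := quadform_nonneg S hS 1 (-1)
      rw [hsym] at h1 h2
      simp only [← hp', ← hq', ← hr'] at h1 h2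
      rw [hpz, hrz] at h1 h2 h
      have hqz : q = 0 := by linarith [h1, h2]
      rw [hqz] at h
      norm_num at h
  have hdS : p*r - q^2 = F.det := by
    have hfac : (p*r - q^2 - F.det) * (p*r - q^2 + F.det) = 0 := by
      linear_combination hdS2
    rcases mul_eq_zero.mp hfac with h | h
    · linarith
    · linarith
  -- the trace t
  set t := p + r with ht'
  have ht0 : 0 ≤ t := by positivity
  have ht2 : t^2 = (a+d)^2 + (c-b)^2 := by
    linear_combination e00 + e11 + 2*hdS + 2*hdetF
  have htpos : 0 < t := by
    rcases ht0.lt_or_eq with h | h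
    · exact h
    · exfalso
      have hK : (a+d)^2 + (c-b)^2 = 0 := by rw [← ht2, ← h]; ring
      have hK2 : a^2+b^2+c^2+d^2 + 2*F.det = 0 := by
        rw [hdetF]; linear_combination hK
      linarith [sq_nonneg a, sq_nonneg b, sq_nonneg c, sq_nonneg d, hF, hK2]
  have htne : t ≠ 0 := ne_of_gt htpos
  -- the optimal rotation
  set R0 : Mat2 := Matrix.of !![(a+d)/t, -((c-b)/t); (c-b)/t, (a+d)/t] with hR0
  have hcs : ((a+d)/t)^2 + ((c-b)/t)^2 = 1 := by
    rw [div_pow, div_pow, ← add_div, ← ht2, div_self (pow_ne_zero 2 htne)]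
  have hR0mem : R0 ∈ SO2 := by
    constructor
    · ext i j
      fin_cases i <;> fin_cases j <;>
        simp [hR0, of_mat2, Matrix.mul_apply, Fin.sum_univ_two, Matrix.one_apply] <;>
        first
          | linear_combination hcs
          | ring
    · rw [Matrix.det_fin_two]
      simp [hR0, of_mat2]
      linear_combination hcs
  -- the common value of the two frobenius norms
  have hsum1 : ∑ i, ∑ j, ((S - 1) i j)^2 = a^2+b^2+c^2+d^2 + 2 - 2*t := by
    simp [Fin.sum_univ_two, Matrix.sub_apply, Matrix.one_apply, hsym]
    linear_combination e00 + e11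
  have hsum2 : ∑ i, ∑ j, ((F - R0) i j)^2 = a^2+b^2+c^2+d^2 + 2 - 2*t := by
    simp only [Fin.sum_univ_two, Matrix.sub_apply, hR0, of_mat2, Matrix.of_apply,
      Matrix.cons_val', Matrix.cons_val_zero, Matrix.cons_val_one, Matrix.head_cons,
      Matrix.empty_val', Matrix.cons_val_fin_one, Matrix.head_fin_const]
    simp only [← ha, ← hb, ← hc, ← hd]
    linear_combination sum2_eq a b c d t htne ht2
  have hmem : frob (S - 1) ∈ {d | ∃ R ∈ SO2, d = frob (F - R)} := by
    exact ⟨R0, hR0mem, by rw [frob, frob, hsum1, hsum2]⟩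
  -- lower bound
  have hlb : ∀ x ∈ {d | ∃ R ∈ SO2, d = frob (F - R)}, frob (S - 1) ≤ x := by
    rintro x ⟨R, ⟨hRo, hRd⟩, rfl⟩
    set u := R 0 0 with hu
    set v := R 0 1 with hv
    set w := R 1 0 with hw
    set z := R 1 1 with hz
    have o00 : u^2 + w^2 = 1 := by
      have h := congrFun (congrFun hRo 0) 0
      simp [Matrix.mul_apply, Fin.sum_univ_two, Matrix.transpose_apply, Matrix.one_apply] at h
      linear_combination h
    have o11 : v^2 + z^2 = 1 := by
      have h := congrFun (congrFun hRo 1) 1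
      simp [Matrix.mul_apply, Fin.sum_univ_two, Matrix.transpose_apply, Matrix.one_apply] at h
      linear_combination h
    have odet : u*z - v*w = 1 := by
      rw [Matrix.det_fin_two] at hRd; linarith [hRd]
    have hkey : (v + w)^2 + (z - u)^2 = 0 := by
      linear_combination o00 + o11 - 2*odet
    have hvw : v = -w := by
      have h1 : (v + w)^2 = 0 := by linarith [sq_nonneg (v+w), sq_nonneg (z-u), hkey]
      have := pow_eq_zero_iff (n := 2) (by norm_num) |>.mp h1
      linarith
    have hzu : z = u := by
      have h1 : (z - u)^2 = 0 := by linarith [sq_nonneg (v+w), sq_nonneg (z-u), hkey]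
      have := pow_eq_zero_iff (n := 2) (by norm_num) |>.mp h1
      linarith
    have hip : a*u + b*v + c*w + d*z ≤ t := by
      rw [hvw, hzu]
      have key : 2*t*(t - (a*u + b*(-w) + c*w + d*u)) =
          ((a+d) - t*u)^2 + ((c-b) - t*w)^2 := by
        linear_combination (-(t^2))*o00 + ht2
      have hnn : 0 ≤ 2*t*(t - (a*u + b*(-w) + c*w + d*u)) := by
        rw [key]; positivity
      by_contra hcon
      push_neg at hcon
      have hneg := mul_pos (show (0:ℝ) < 2*t by linarith)
        (show (0:ℝ) < (a*u + b*(-w) + c*w + d*u) - t by linarith)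
      linarith [hnn, hneg]
    rw [frob, frob]
    apply Real.sqrt_le_sqrt
    rw [hsum1]
    simp [Fin.sum_univ_two, Matrix.sub_apply]
    linarith [o00, o11, hip]
  unfold distSO2
  apply le_antisymm
  · exact csInf_le ⟨frob (S - 1), fun x hx => hlb x hx⟩ hmem
  · exact le_csInf ⟨frob (F - R0), R0, hR0mem, rfl⟩ hlb
end
end
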